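/- Let p : [0,∞) → ℝ be continuously differentiable satisfying ṗ(t) = −k |p(t)|^β sgn(p(t)) with k > 0 and β ∈ (0,1). Then p(t) = 0 for all t ≥ |p(0)|^{1−β}/(k(1−β)). -/

import Mathlib

theorem finite_time_convergence_of_scalar_ode
    (k β : ℝ) (hk : 0 < k) (hβ : β ∈ Set.Ioo (0 : ℝ) 1)
    (p : ℝ → ℝ) (p' : ℝ → ℝ)
    (hderiv : ∀ t ≥ (0 : ℝ), HasDerivAt p (p' t) t)
    (hcont : ContinuousOn p' (Set.Ici 0))
    (hode : ∀ t ≥ (0 : ℝ), p' t = -k * |p t| ^ β * Real.sign (p t)) :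
    ∀ t ≥ |p 0| ^ (1 - β) / (k * (1 - β)), p t = 0 := by
  obtain ⟨hβ0, hβ1⟩ := hβ
  set T : ℝ := |p 0| ^ (1 - β) / (k * (1 - β)) with hT
  have hk1β : 0 < k * (1 - β) := mul_pos hk (by linarith)
  have hTnn : 0 ≤ T := div_nonneg (Real.rpow_nonneg (abs_nonneg _) _) hk1β.le
  -- Step 1: g = p^2 is antitone on [0, ∞)
  have hg : AntitoneOn (fun t => (p t) ^ 2) (Set.Ici (0:ℝ)) := by
    apply antitoneOn_of_deriv_nonpos (convex_Ici 0)
    · exact fun t ht => ((hderiv t ht).pow 2).continuousAt.continuousWithinAt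
    · intro t ht
      rw [interior_Ici] at ht
      exact ((hderiv t ht.le).pow 2).differentiableAt.differentiableWithinAt
    · intro t ht
      rw [interior_Ici] at ht
      rw [((hderiv t ht.le).fun_pow 2).deriv]
      have hne : p' t = -k * |p t| ^ β * Real.sign (p t) := hode t ht.le
      rcases lt_trichotomy (p t) 0 with h | h | h
      · rw [hne, Real.sign_of_neg h]
        have h1 : (0:ℝ) ≤ |p t| ^ β := Real.rpow_nonneg (abs_nonneg _) _
        have h2 : |p t| = -(p t) := abs_of_neg h
        norm_num
        nlinarith [mul_nonneg hk.le h1, mul_nonneg (mul_nonneg hk.le h1) (neg_nonneg.2 h.le)]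
      · simp [hne, h]
      · rw [hne, Real.sign_of_pos h]
        have h1 : (0:ℝ) ≤ |p t| ^ β := Real.rpow_nonneg (abs_nonneg _) _
        have h2 : |p t| = p t := abs_of_pos h
        norm_num
        nlinarith [mul_nonneg hk.le h1, mul_nonneg (mul_nonneg hk.le h1) h.le]
  -- Step 2: p hits zero somewhere in [0, T]
  have hzero : ∃ t0 ∈ Set.Icc (0:ℝ) T, p t0 = 0 := by
    by_contra hcon
    push_neg at hcon
    -- φ t = |p t|^(1-β) + (1-β)*k*t has derivative 0 on [0,T]
    set φ : ℝ → ℝ := fun t => |p t| ^ (1 - β) + (1 - β) * k * t with hφ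
    have hderφ : ∀ t ∈ Set.Icc (0:ℝ) T, HasDerivAt φ 0 t := by
      intro t ht
      have hne : p t ≠ 0 := hcon t ht
      have habs : HasDerivAt (fun s => |p s|) ((SignType.sign (p t) : ℝ) * p' t) t :=
        (hasDerivAt_abs hne).comp t (hderiv t ht.1)
      have hpos : 0 < |p t| := abs_pos.2 hne
      have hrpow : HasDerivAt (fun x : ℝ => x ^ (1 - β))
          ((1 - β) * |p t| ^ (1 - β - 1)) |p t| :=
        Real.hasDerivAt_rpow_const (Or.inl hpos.ne')
      have hcomp : HasDerivAt (fun s => |p s| ^ (1 - β))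
          ((1 - β) * |p t| ^ (1 - β - 1) * ((SignType.sign (p t) : ℝ) * p' t)) t :=
        hrpow.comp (h := fun s => |p s|) t habs
      have key : (1 - β) * |p t| ^ (1 - β - 1) * ((SignType.sign (p t) : ℝ) * p' t)
          = -((1 - β) * k) := by
        rw [hode t ht.1]
        have hsgn : (SignType.sign (p t) : ℝ) = Real.sign (p t) := by
          rcases hne.lt_or_gt with h | h
          · rw [Real.sign_of_neg h]; simp [h]
          · rw [Real.sign_of_pos h]; simp [h]
        rw [hsgn]
        have hs2 : Real.sign (p t) * Real.sign (p t) = 1 := by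
          rcases hne.lt_or_gt with h | h
          · rw [Real.sign_of_neg h]; norm_num
          · rw [Real.sign_of_pos h]; norm_num
        have hpow : |p t| ^ (1 - β - 1) * |p t| ^ β = 1 := by
          rw [← Real.rpow_add hpos]
          norm_num
        calc (1 - β) * |p t| ^ (1 - β - 1) * (Real.sign (p t) * (-k * |p t| ^ β * Real.sign (p t)))
            = -((1 - β) * k) * (|p t| ^ (1 - β - 1) * |p t| ^ β)
              * (Real.sign (p t) * Real.sign (p t)) := by ring
          _ = -((1 - β) * k) := by rw [hpow, hs2]; ring
      have : HasDerivAt φ (-((1 - β) * k) + (1 - β) * k) t := by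
        rw [← key] at *
        exact hcomp.add ((hasDerivAt_id t).const_mul ((1 - β) * k) |>.congr_deriv (by ring))
      simpa using this
    have hconst : φ T = φ 0 := by
      have := constant_of_has_deriv_right_zero
        (fun t ht => (hderφ t ht).continuousAt.continuousWithinAt)
        (fun t ht => (hderφ t (Set.mem_Icc_of_Ico ht)).hasDerivWithinAt)
        T (Set.right_mem_Icc.2 hTnn)
      exact this
    have hφ0 : φ 0 = |p 0| ^ (1 - β) := by simp [hφ]
    have hφT : φ T = |p T| ^ (1 - β) + (1 - β) * k * T := rfl
    have hTval : (1 - β) * k * T = |p 0| ^ (1 - β) := by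
      rw [hT]; field_simp
    have hposT : 0 < |p T| ^ (1 - β) :=
      Real.rpow_pos_of_pos (abs_pos.2 (hcon T (Set.right_mem_Icc.2 hTnn))) _
    rw [hφT, hφ0, hTval] at hconst
    linarith
  -- Step 3: conclude
  obtain ⟨t0, ht0, hpt0⟩ := hzero
  intro t ht
  have ht0t : t0 ≤ t := le_trans ht0.2 ht
  have htnn : (0:ℝ) ≤ t := le_trans hTnn ht
  have := hg ht0.1 htnn ht0t
  simp only [hpt0] at this
  have h2 : (p t) ^ 2 ≤ 0 := by simpa using this
  have h3 : (p t) ^ 2 = 0 := le_antisymm h2 (sq_nonneg _)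
  exact pow_eq_zero_iff (n := 2) (by norm_num) |>.1 h3
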